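/- Let π : 2^ℕ × 2^ℕ → 2^ℕ be the first-coordinate projection and let σ : 2^ℕ → 2^ℕ × 2^ℕ be defined by σ(t) = min(h(t) ∩ π⁻¹({t})), where h : 2^ℕ → 𝒞 is a homeomorphism onto 𝒞 = {C compact : π(C) = 2^ℕ} and the minimum is taken with respect to the lexicographic order on 2^ℕ × 2^ℕ. Then σ is a function of Baire class 1 and π(σ(t)) = t for all t. -/

import Mathlib

open TopologicalSpace

abbrev Cantor : Type := ℕ → Bool

noncomputable instance : MetricSpace Cantor :=
  TopologicalSpace.metrizableSpaceMetric Cantor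

/-- The lexicographic order on `2^ℕ` (with `false < true`). -/
def cantorLe (x y : Cantor) : Prop :=
  x = y ∨ ∃ n, (∀ m, m < n → x m = y m) ∧ x n < y n

/-- `𝒞 = {C ∈ K(2^ℕ × 2^ℕ) : π(C) = 2^ℕ}`. -/
def Cc : Set (NonemptyCompacts (Cantor × Cantor)) :=
  {C | Prod.fst '' (C : Set (Cantor × Cantor)) = Set.univ}


section FSigma

variable {A : Type*} [TopologicalSpace A]

/-- `s` is an `Fσ` set. -/
def IsFs (s : Set A) : Prop :=
  ∃ F : ℕ → Set A, (∀ n, IsClosed (F n)) ∧ s = ⋃ n, F n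

lemma IsClosed.isFs {s : Set A} (h : IsClosed s) : IsFs s :=
  ⟨fun _ => s, fun _ => h, (Set.iUnion_const s).symm⟩

lemma isFs_iUnion {ι : Type*} [Countable ι] {s : ι → Set A}
    (h : ∀ i, IsFs (s i)) : IsFs (⋃ i, s i) := by
  rcases isEmpty_or_nonempty ι with hι | hι
  · simpa only [Set.iUnion_of_empty] using isClosed_empty.isFs
  · obtain ⟨f, hf⟩ := exists_surjective_nat ι
    choose F hFc hFe using h
    refine ⟨fun n => F (f n.unpair.1) n.unpair.2, fun n => hFc _ _, ?_⟩
    ext x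
    simp only [Set.mem_iUnion]
    constructor
    · rintro ⟨i, hx⟩
      rw [hFe i] at hx
      obtain ⟨m, hm⟩ := Set.mem_iUnion.1 hx
      obtain ⟨n, rfl⟩ := hf i
      exact ⟨Nat.pair n m, by simpa [Nat.unpair_pair] using hm⟩
    · rintro ⟨n, hx⟩
      exact ⟨f n.unpair.1, (hFe _).symm ▸ Set.mem_iUnion.2 ⟨n.unpair.2, hx⟩⟩

lemma IsFs.inter_closed {s c : Set A} (hs : IsFs s) (hc : IsClosed c) : IsFs (s ∩ c) := by
  obtain ⟨F, hFc, rfl⟩ := hs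
  exact ⟨fun n => F n ∩ c, fun n => (hFc n).inter hc, by rw [Set.iUnion_inter]⟩

lemma IsFs.inter {s u : Set A} (hs : IsFs s) (hu : IsFs u) : IsFs (s ∩ u) := by
  obtain ⟨F, hFc, rfl⟩ := hs; obtain ⟨G, hGc, rfl⟩ := hu
  have : (⋃ n, F n) ∩ ⋃ n, G n = ⋃ p : ℕ × ℕ, F p.1 ∩ G p.2 := by
    ext x
    simp only [Set.mem_inter_iff, Set.mem_iUnion, Prod.exists]
    exact ⟨fun ⟨⟨n, hn⟩, ⟨m, hm⟩⟩ => ⟨n, m, hn, hm⟩, fun ⟨n, m, hn, hm⟩ => ⟨⟨n, hn⟩, ⟨m, hm⟩⟩⟩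
  rw [this]
  exact isFs_iUnion fun p => ((hFc p.1).inter (hGc p.2)).isFs

lemma IsOpen.isFs {B : Type*} [PseudoMetricSpace B] {u : Set B} (hu : IsOpen u) : IsFs u := by
  obtain ⟨F, hc, -, hU, -⟩ := hu.exists_iUnion_isClosed
  exact ⟨F, hc, hU.symm⟩

end FSigma

lemma isClosed_cylinder (x : Cantor) (n : ℕ) : IsClosed (PiNat.cylinder x n) := by
  rw [PiNat.cylinder_eq_pi]
  exact isClosed_set_pi fun a _ => isClosed_singleton

/-- The set of `t` such that `h t` meets `{t} × K`, for `K` closed, is closed. -/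
lemma isClosed_hits (h : Cantor ≃ₜ ↥Cc) {K : Set Cantor} (hK : IsClosed K) :
    IsClosed {t : Cantor | ∃ y ∈ K, (t, y) ∈ ((h t).1 : Set (Cantor × Cantor))} := by
  apply IsSeqClosed.isClosed
  intro u t hu hut
  choose y hyK hy using hu
  obtain ⟨z, hzK, φ, hφ, hz⟩ := hK.isCompact.tendsto_subseq hyK
  refine ⟨z, hzK, ?_⟩
  rw [EMetric.mem_iff_infEdist_zero_of_closed (h t).1.isCompact.isClosed]
  have hpt : Filter.Tendsto (fun n => ((u (φ n), y (φ n)) : Cantor × Cantor))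
      Filter.atTop (nhds (t, z)) :=
    ((hut.comp hφ.tendsto_atTop).prodMk_nhds hz)
  have he1 : Filter.Tendsto (fun n => edist ((t, z) : Cantor × Cantor) (u (φ n), y (φ n)))
      Filter.atTop (nhds 0) := by
    have := tendsto_iff_edist_tendsto_0.1 hpt
    simpa [edist_comm] using this
  have hh : Filter.Tendsto (fun n => ((h (u (φ n))).1 : NonemptyCompacts (Cantor × Cantor)))
      Filter.atTop (nhds (h t).1) := by
    exact (continuous_subtype_val.tendsto _).comp
      ((h.continuous.tendsto t).comp (hut.comp hφ.tendsto_atTop))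
  have he2 : Filter.Tendsto
      (fun n => edist ((h (u (φ n))).1 : NonemptyCompacts (Cantor × Cantor)) (h t).1)
      Filter.atTop (nhds 0) := by
    simpa [edist_comm] using tendsto_iff_edist_tendsto_0.1 hh
  have key : ∀ n, EMetric.infEdist ((t, z) : Cantor × Cantor) ((h t).1 : Set (Cantor × Cantor)) ≤
      edist ((t, z) : Cantor × Cantor) (u (φ n), y (φ n)) +
        edist ((h (u (φ n))).1 : NonemptyCompacts (Cantor × Cantor)) (h t).1 := by
    intro n
    calc EMetric.infEdist ((t, z) : Cantor × Cantor) ((h t).1 : Set (Cantor × Cantor))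
        ≤ EMetric.infEdist ((t, z) : Cantor × Cantor)
            ((h (u (φ n))).1 : Set (Cantor × Cantor)) +
          EMetric.hausdorffEdist ((h (u (φ n))).1 : Set (Cantor × Cantor)) (h t).1 :=
          EMetric.infEdist_le_infEdist_add_hausdorffEdist
      _ ≤ edist ((t, z) : Cantor × Cantor) (u (φ n), y (φ n)) +
          edist ((h (u (φ n))).1 : NonemptyCompacts (Cantor × Cantor)) (h t).1 := by
          gcongr
          exact EMetric.infEdist_le_edist_of_mem (hy (φ n))
          exact le_rfl
  have hsum : Filter.Tendsto
      (fun n => edist ((t, z) : Cantor × Cantor) (u (φ n), y (φ n)) +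
        edist ((h (u (φ n))).1 : NonemptyCompacts (Cantor × Cantor)) (h t).1)
      Filter.atTop (nhds 0) := by
    simpa using he1.add he2
  have := ge_of_tendsto' hsum key
  exact le_antisymm this (zero_le)

lemma not_cantorLe {x y : Cantor} {k : ℕ} (hagree : ∀ m < k, x m = y m)
    (hx : x k = true) (hy : y k = false) : ¬ cantorLe x y := by
  rintro (rfl | ⟨n, hn, hlt⟩)
  · rw [hx] at hy; exact Bool.noConfusion hy
  · rw [Bool.lt_iff] at hlt
    rcases lt_trichotomy n k with hnk | rfl | hnk
    · rw [hagree n hnk] at hlt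
      rw [hlt.1] at hlt
      exact Bool.noConfusion hlt.2
    · rw [hx] at hlt; exact Bool.noConfusion hlt.1
    · rw [hn k hnk, hy] at hx; exact Bool.noConfusion hx

lemma mem_cylinder_update {x y : Cantor} {k : ℕ} :
    y ∈ PiNat.cylinder (Function.update x k false) (k + 1) ↔
      (∀ m < k, y m = x m) ∧ y k = false := by
  simp only [PiNat.mem_cylinder_iff]
  constructor
  · intro H
    refine ⟨fun m hm => ?_, ?_⟩
    · have := H m (by omega); rwa [Function.update_of_ne (by omega)] at this
    · have := H k (by omega); rwa [Function.update_self] at this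
  · rintro ⟨h1, h2⟩ i hi
    rcases Nat.lt_succ_iff_lt_or_eq.1 hi with hik | rfl
    · rw [Function.update_of_ne hik.ne]; exact h1 i hik
    · rw [Function.update_self]; exact h2

section Min

variable (h : Cantor ≃ₜ ↥Cc) (g : Cantor → Cantor)
  (hg : ∀ t, (t, g t) ∈ ((h t).1 : Set (Cantor × Cantor)))
  (hgmin : ∀ t y, (t, y) ∈ ((h t).1 : Set (Cantor × Cantor)) → cantorLe (g t) y)

include hg hgmin in
lemma preimage_cyl_eq (x : Cantor) (n : ℕ) :
    g ⁻¹' PiNat.cylinder x n =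
      {t | ∃ y ∈ PiNat.cylinder x n, (t, y) ∈ ((h t).1 : Set (Cantor × Cantor))} ∩
        ⋂ k ∈ Finset.range n,
          (if x k = true then
            {t | ∃ y ∈ PiNat.cylinder (Function.update x k false) (k + 1),
              (t, y) ∈ ((h t).1 : Set (Cantor × Cantor))}ᶜ
          else Set.univ) := by
  ext t
  simp only [Set.mem_preimage, Set.mem_inter_iff, Set.mem_setOf_eq, Set.mem_iInter,
    Finset.mem_range]
  constructor
  · intro ht
    refine ⟨⟨g t, ht, hg t⟩, fun k hk => ?_⟩
    split_ifs with hxk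
    · intro hmemB
      obtain ⟨y, hyB, hy⟩ := hmemB
      rw [mem_cylinder_update] at hyB
      refine not_cantorLe (x := g t) (y := y) (k := k) ?_ ?_ hyB.2 (hgmin t y hy)
      · intro m hm
        rw [ht m (hm.trans hk), hyB.1 m hm]
      · rw [ht k hk]; exact hxk
    · exact Set.mem_univ t
  · rintro ⟨⟨y₀, hy₀c, hy₀⟩, hW⟩
    by_contra hcon
    rw [PiNat.mem_cylinder_iff] at hcon
    push_neg at hcon
    obtain ⟨i, hi, hne⟩ := hcon
    have hex : ∃ i, i < n ∧ g t i ≠ x i := ⟨i, hi, hne⟩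
    set k := Nat.find hex with hkdef
    obtain ⟨hkn, hkne⟩ := Nat.find_spec hex
    have hagree : ∀ m < k, g t m = x m := by
      intro m hm
      by_contra hm'
      exact Nat.find_min hex hm ⟨hm.trans hkn, hm'⟩
    rcases Bool.eq_false_or_eq_true (g t k) with hgk | hgk
    · -- g t k = true, so x k = false, contradicting minimality against y₀
      have hxk : x k = false := by
        rcases Bool.eq_false_or_eq_true (x k) with hxk | hxk
        · exact absurd (hgk.trans hxk.symm) hkne
        · exact hxk
      refine not_cantorLe (x := g t) (y := y₀) (k := k) ?_ hgk ?_ (hgmin t y₀ hy₀)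
      · intro m hm
        rw [hagree m hm, (hy₀c m (hm.trans hkn)).symm]
      · rw [hy₀c k hkn]; exact hxk
    · -- g t k = false, so x k = true, and t witnesses the forbidden set B k
      have hxk : x k = true := by
        rcases Bool.eq_false_or_eq_true (x k) with hxk | hxk
        · exact hxk
        · exact absurd (hgk.trans hxk.symm) hkne
      have := hW k hkn
      rw [if_pos hxk] at this
      exact this ⟨g t, mem_cylinder_update.2 ⟨hagree, hgk⟩, hg t⟩

include hg hgmin in
lemma isFs_preimage_cyl (x : Cantor) (n : ℕ) : IsFs (g ⁻¹' PiNat.cylinder x n) := by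
  rw [preimage_cyl_eq h g hg hgmin x n]
  have hA : IsClosed {t | ∃ y ∈ PiNat.cylinder x n,
      (t, y) ∈ ((h t).1 : Set (Cantor × Cantor))} :=
    isClosed_hits h (isClosed_cylinder x n)
  have hW : IsOpen (⋂ k ∈ Finset.range n,
      (if x k = true then
        {t | ∃ y ∈ PiNat.cylinder (Function.update x k false) (k + 1),
          (t, y) ∈ ((h t).1 : Set (Cantor × Cantor))}ᶜ
      else Set.univ)) := by
    apply isOpen_biInter_finset
    intro k _
    split_ifs
    · exact (isClosed_hits h (isClosed_cylinder _ _)).isOpen_compl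
    · exact isOpen_univ
  exact hA.isFs.inter hW.isFs

end Min

/-- The cylinder determined by a finite list of booleans. -/
def cylL (u : List Bool) : Set Cantor :=
  PiNat.cylinder (fun i => u.getD i false) u.length

lemma cylL_ofFn (x : Cantor) (n : ℕ) :
    cylL (List.ofFn fun i : Fin n => x i) = PiNat.cylinder x n := by
  ext y
  simp only [cylL, PiNat.mem_cylinder_iff, List.length_ofFn]
  refine forall₂_congr fun i hi => ?_
  rw [List.getD_eq_getElem _ _ (by simpa using hi), List.getElem_ofFn]

lemma exists_box {U : Set (Cantor × Cantor)} (hU : IsOpen U) {p : Cantor × Cantor}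
    (hp : p ∈ U) : ∃ N, PiNat.cylinder p.1 N ×ˢ PiNat.cylinder p.2 N ⊆ U := by
  rw [isOpen_prod_iff] at hU
  obtain ⟨V, W, hV, hW, h1, h2, hVW⟩ := hU p.1 p.2 hp
  obtain ⟨s, ⟨x, n, rfl⟩, hxs, hsV⟩ :=
    (PiNat.isTopologicalBasis_cylinders _).exists_subset_of_mem_open h1 hV
  obtain ⟨s', ⟨x', m, rfl⟩, hxs', hsW⟩ :=
    (PiNat.isTopologicalBasis_cylinders _).exists_subset_of_mem_open h2 hW
  refine ⟨max n m, ?_⟩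
  rintro ⟨a, b⟩ ⟨ha, hb⟩
  refine hVW ⟨hsV ?_, hsW ?_⟩
  · rw [← PiNat.mem_cylinder_iff_eq.1 hxs]
    exact PiNat.cylinder_anti _ (le_max_left n m) ha
  · rw [← PiNat.mem_cylinder_iff_eq.1 hxs']
    exact PiNat.cylinder_anti _ (le_max_right n m) hb

theorem stmt4' (h : Cantor ≃ₜ ↥Cc) (σ : Cantor → Cantor × Cantor)
    (hmem : ∀ t : Cantor,
      σ t ∈ ((h t).1 : Set (Cantor × Cantor)) ∩ Prod.fst ⁻¹' {t})
    (hmin : ∀ t : Cantor, ∀ x ∈ ((h t).1 : Set (Cantor × Cantor)) ∩ Prod.fst ⁻¹' {t},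
      cantorLe (σ t).2 x.2) :
    (∀ U : Set (Cantor × Cantor), IsOpen U → IsFs (σ ⁻¹' U)) ∧ ∀ t, (σ t).1 = t := by
  classical
  have hfst : ∀ t, (σ t).1 = t := fun t => (hmem t).2
  set g : Cantor → Cantor := fun t => (σ t).2 with hgdef
  have hσeq : ∀ t, σ t = (t, g t) := by
    intro t
    have : σ t = ((σ t).1, (σ t).2) := rfl
    rw [this, hfst t]
  have hg : ∀ t, (t, g t) ∈ ((h t).1 : Set (Cantor × Cantor)) := fun t =>
    (hσeq t) ▸ (hmem t).1
  have hgmin : ∀ t y, (t, y) ∈ ((h t).1 : Set (Cantor × Cantor)) → cantorLe (g t) y :=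
    fun t y hy => hmin t (t, y) ⟨hy, rfl⟩
  refine ⟨?_, hfst⟩
  intro U hUopen
  have main : σ ⁻¹' U = ⋃ q : List Bool × List Bool,
      σ ⁻¹' (if cylL q.1 ×ˢ cylL q.2 ⊆ U then cylL q.1 ×ˢ cylL q.2 else ∅) := by
    ext t
    simp only [Set.mem_preimage, Set.mem_iUnion]
    constructor
    · intro ht
      obtain ⟨N, hN⟩ := exists_box hUopen ht
      refine ⟨(List.ofFn fun i : Fin N => (σ t).1 i, List.ofFn fun i : Fin N => (σ t).2 i), ?_⟩
      simp only [cylL_ofFn]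
      rw [if_pos hN]
      exact ⟨PiNat.self_mem_cylinder _ _, PiNat.self_mem_cylinder _ _⟩
    · rintro ⟨q, hq⟩
      split_ifs at hq with hsub
      · exact hsub hq
      · exact absurd hq (Set.notMem_empty _)
  rw [main]
  apply isFs_iUnion
  intro q
  split_ifs with hsub
  · have : σ ⁻¹' (cylL q.1 ×ˢ cylL q.2) = g ⁻¹' (cylL q.2) ∩ cylL q.1 := by
      ext t
      simp only [Set.mem_preimage, Set.mem_prod, Set.mem_inter_iff, hfst t]
      exact ⟨fun ⟨h1, h2⟩ => ⟨h2, h1⟩, fun ⟨h1, h2⟩ => ⟨h2, h1⟩⟩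
    rw [this]
    exact (isFs_preimage_cyl h g hg hgmin _ _).inter_closed (isClosed_cylinder _ _)
  · simpa using isClosed_empty.isFs

/-- A function is of Baire class 1 iff preimages of open sets are `Fσ`. -/
def IsBaireClassOne {A B : Type*} [TopologicalSpace A] [TopologicalSpace B]
    (f : A → B) : Prop :=
  ∀ U : Set B, IsOpen U →
    ∃ F : ℕ → Set A, (∀ n, IsClosed (F n)) ∧ f ⁻¹' U = ⋃ n, F n

/-- If `h : 2^ℕ → 𝒞` is a homeomorphism and `σ(t)` is the lexicographic
minimum of `h(t) ∩ π⁻¹({t})`, then `σ` is of Baire class 1 and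
`π(σ(t)) = t` for all `t`. -/
theorem stmt4 (h : Cantor ≃ₜ ↥Cc) (σ : Cantor → Cantor × Cantor)
    (hmem : ∀ t : Cantor,
      σ t ∈ ((h t).1 : Set (Cantor × Cantor)) ∩ Prod.fst ⁻¹' {t})
    (hmin : ∀ t : Cantor, ∀ x ∈ ((h t).1 : Set (Cantor × Cantor)) ∩ Prod.fst ⁻¹' {t},
      cantorLe (σ t).2 x.2) :
    IsBaireClassOne σ ∧ ∀ t, (σ t).1 = t := by
  obtain ⟨h1, h2⟩ := stmt4' h σ hmem hmin
  exact ⟨fun U hU => h1 U hU, h2⟩
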